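/- Suppose a sequence of positive reals (μ_n) satisfies μ_{n+1} ≤ μ_n / (1 − e^{−q μ_n}) for all n where q > 0 is constant. Then there exists C > 0 such that μ_n ≤ C log n for all n ≥ 2. -/

import Mathlib

private lemma step_ineq (q : ℝ) (hq : 0 < q) (μ : ℕ → ℝ) (hpos : ∀ n, 0 < μ n)
    (hrec : ∀ n, μ (n + 1) ≤ μ n / (1 - Real.exp (-q * μ n))) (n : ℕ) :
    μ (n + 1) ≤ μ n + μ n / (Real.exp (q * μ n) - 1) := by
  have ht : 0 < q * μ n := mul_pos hq (hpos n)
  have het : 1 < Real.exp (q * μ n) := by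
    have := Real.add_one_le_exp (q * μ n); nlinarith
  have hexp_ne : Real.exp (q * μ n) ≠ 0 := (Real.exp_pos _).ne'
  have hden : Real.exp (q * μ n) - 1 ≠ 0 := by linarith
  have key : μ n / (1 - Real.exp (-q * μ n))
      = μ n + μ n / (Real.exp (q * μ n) - 1) := by
    rw [neg_mul, Real.exp_neg]
    have hden' : Real.exp (μ n * q) - 1 ≠ 0 := by rwa [mul_comm]
    field_simp
    ring
  calc μ (n + 1) ≤ μ n / (1 - Real.exp (-q * μ n)) := hrec n
    _ = μ n + μ n / (Real.exp (q * μ n) - 1) := key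

set_option maxHeartbeats 1000000 in
/-- If a sequence of positive reals satisfies
`μ_{n+1} ≤ μ_n / (1 − e^{−q μ_n})` for a constant `q > 0`, then there is a constant
`C > 0` with `μ_n ≤ C log n` for all `n ≥ 2`. -/
theorem stmt6 (q : ℝ) (hq : 0 < q) (μ : ℕ → ℝ) (hpos : ∀ n, 0 < μ n)
    (hrec : ∀ n, μ (n + 1) ≤ μ n / (1 - Real.exp (-q * μ n))) :
    ∃ C : ℝ, 0 < C ∧ ∀ n : ℕ, 2 ≤ n → μ n ≤ C * Real.log n := by
  set B : ℝ := μ 2 + 2 / q with hB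
  have hBpos : 0 < B := by have := hpos 2; positivity
  have hqB : 2 ≤ q * B := by
    have h2 : q * (2 / q) = 2 := by field_simp
    have h3 := hpos 2
    rw [hB, mul_add, h2]
    nlinarith
  clear_value B
  -- main inductive estimate
  have key : ∀ n : ℕ, 2 ≤ n → μ n ≤ B + (4 / q) * Real.log n := by
    intro n hn
    induction n, hn using Nat.le_induction with
    | base =>
      have hlog2 : 0 ≤ Real.log 2 := Real.log_nonneg (by norm_num)
      have h1 : (0:ℝ) ≤ 2 / q := by positivity
      have h2 : (0:ℝ) ≤ 4 / q * Real.log 2 := by positivity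
      norm_num
      linarith [hpos 2]
    | succ n hn ih =>
      have hn1 : (2:ℝ) ≤ (n:ℝ) := by exact_mod_cast hn
      have hnpos : (0:ℝ) < (n:ℝ) := by linarith
      have hn1pos : (0:ℝ) < (n:ℝ) + 1 := by linarith
      have hlogn : 0 ≤ Real.log n := Real.log_nonneg (by linarith)
      have hlogn1 : 0 ≤ Real.log ((n:ℝ) + 1) := Real.log_nonneg (by linarith)
      have hlog_mono : Real.log (n:ℝ) ≤ Real.log ((n:ℝ)+1) :=
        Real.log_le_log hnpos (by linarith)
      have hstep := step_ineq q hq μ hpos hrec n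
      have hE : 0 < Real.exp (q * μ n) - 1 := by
        have := Real.add_one_le_exp (q * μ n)
        have := mul_pos hq (hpos n)
        linarith
      -- log gap: 1/(n+1) ≤ log(n+1) − log n
      have hgap : 1 / ((n:ℝ) + 1) ≤ Real.log ((n:ℝ)+1) - Real.log n := by
        have h1 : Real.log ((n:ℝ) / ((n:ℝ)+1)) ≤ (n:ℝ)/((n:ℝ)+1) - 1 :=
          Real.log_le_sub_one_of_pos (by positivity)
        rw [Real.log_div hnpos.ne' hn1pos.ne'] at h1
        have h2 : (n:ℝ)/((n:ℝ)+1) - 1 = -(1/((n:ℝ)+1)) := by field_simp; ring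
        rw [h2] at h1
        linarith
      have hcast : ((n:ℝ) + 1) = ((n+1 : ℕ) : ℝ) := by push_cast; ring
      by_cases hcase : μ n ≤ (2/q) * Real.log ((n:ℝ)+1) + B - 1/q
      · -- small case: μ (n+1) ≤ μ n + 1/q
        have hsmall : μ n / (Real.exp (q * μ n) - 1) ≤ 1 / q := by
          rw [div_le_div_iff₀ hE hq]
          have := Real.add_one_le_exp (q * μ n)
          nlinarith [hpos n]
        have hhalf : (0:ℝ) ≤ (2/q) * Real.log ((n:ℝ)+1) := by positivity
        have hsum : (4:ℝ)/q * Real.log ((n:ℝ)+1)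
            = 2/q * Real.log ((n:ℝ)+1) + 2/q * Real.log ((n:ℝ)+1) := by ring
        rw [← hcast]
        linarith [hstep, hsmall, hcase]
      · push_neg at hcase
        -- big case
        set E : ℝ := Real.exp (q * B - 1) with hEdef
        have hE2 : 2 ≤ E := by
          have := Real.add_one_le_exp (q * B - 1); simp only [hEdef]; linarith
        have hEqB : q * B ≤ E := by
          have := Real.add_one_le_exp (q * B - 1); simp only [hEdef]; linarith
        have hEexp : Real.exp (q * B - 1) = E := hEdef.symm
        clear_value E
        have hexp_ge : ((n:ℝ)+1)^2 * E ≤ Real.exp (q * μ n) := by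
          have h1 : q * ((2/q) * Real.log ((n:ℝ)+1) + B - 1/q)
              = 2 * Real.log ((n:ℝ)+1) + (q * B - 1) := by field_simp; ring
          have h2 : Real.exp (2 * Real.log ((n:ℝ)+1) + (q*B-1))
              = ((n:ℝ)+1)^2 * E := by
            rw [Real.exp_add, hEexp]
            congr 1
            rw [two_mul, Real.exp_add, Real.exp_log hn1pos, sq]
          have h3 : Real.exp (q * ((2/q) * Real.log ((n:ℝ)+1) + B - 1/q))
              ≤ Real.exp (q * μ n) :=
            Real.exp_le_exp.mpr (by nlinarith [hcase])
          rw [h1, h2] at h3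
          exact h3
        have hD : (0:ℝ) < ((n:ℝ)+1)^2 * E - 1 := by nlinarith
        have hnum : 0 < B + (4/q) * Real.log n := by positivity
        have hfrac : μ n / (Real.exp (q * μ n) - 1)
            ≤ (B + (4/q) * Real.log n) / (((n:ℝ)+1)^2 * E - 1) := by
          apply div_le_div₀ (le_of_lt hnum) ih hD (by linarith)
        have hlognle : Real.log (n:ℝ) ≤ (n:ℝ) - 1 := by
          have := Real.log_le_sub_one_of_pos hnpos; linarith
        have harith : (B + (4/q) * Real.log n) * (q * ((n:ℝ)+1))
            ≤ 4 * (((n:ℝ)+1)^2 * E - 1) := by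
          have hexpand : (B + (4/q) * Real.log n) * (q * ((n:ℝ)+1))
              = q * B * ((n:ℝ)+1) + 4 * ((n:ℝ)+1) * Real.log n := by
            field_simp
          rw [hexpand]
          set x : ℝ := (n:ℝ) + 1 with hxdef
          have hx : (3:ℝ) ≤ x := by rw [hxdef]; linarith
          have hL2 : Real.log n ≤ x - 2 := by rw [hxdef]; linarith
          have p1 : 4 * x * Real.log n ≤ 4 * x * (x - 2) := by
            have h0 : (0:ℝ) ≤ 4 * x := by linarith
            have := mul_le_mul_of_nonneg_left hL2 h0
            linarith
          have p2 : 4*x^2 + 2*x^2*(q*B) ≤ 4*x^2*E := by nlinarith [sq_nonneg x]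
          have p3 : q*B*x + 4 ≤ 2*x^2*(q*B) + 8*x := by
            have hb : (0:ℝ) ≤ q*B := by linarith
            have hxx : (0:ℝ) ≤ x*(2*x-1) := by nlinarith
            have h1 : 0 ≤ x*(2*x-1)*(q*B) := mul_nonneg hxx hb
            have h1' : x*(2*x-1)*(q*B) = 2*x^2*(q*B) - q*B*x := by ring
            linarith
          linarith
        have hfrac2 : (B + (4/q) * Real.log n) / (((n:ℝ)+1)^2 * E - 1)
            ≤ 4 / (q * ((n:ℝ)+1)) := by
          rw [div_le_div_iff₀ hD (by positivity)]
          linarith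
        have hfrac3 : 4 / (q * ((n:ℝ)+1)) ≤ (4/q) * (Real.log ((n:ℝ)+1) - Real.log n) := by
          have h4 : 4 / (q * ((n:ℝ)+1)) = (4/q) * (1/((n:ℝ)+1)) := by
            field_simp
          rw [h4]
          apply mul_le_mul_of_nonneg_left hgap (by positivity)
        rw [← hcast]
        calc μ (n+1) ≤ μ n + μ n / (Real.exp (q * μ n) - 1) := hstep
          _ ≤ (B + (4/q) * Real.log n) + (4/q) * (Real.log ((n:ℝ)+1) - Real.log n) := by
              linarith [hfrac.trans (hfrac2.trans hfrac3)]
          _ = B + (4/q) * Real.log ((n:ℝ)+1) := by ring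
  -- conclude
  have hlog2 : 0 < Real.log 2 := Real.log_pos (by norm_num)
  refine ⟨B / Real.log 2 + 4 / q, by positivity, ?_⟩
  intro n hn
  have hn1 : (2:ℝ) ≤ (n:ℝ) := by exact_mod_cast hn
  have hlogn : Real.log 2 ≤ Real.log n := Real.log_le_log (by norm_num) hn1
  have h1 := key n hn
  have h2 : B ≤ (B / Real.log 2) * Real.log n := by
    rw [div_mul_eq_mul_div, le_div_iff₀ hlog2]
    nlinarith
  nlinarith [h1, h2, Real.log_nonneg (by linarith : (1:ℝ) ≤ (n:ℝ))]
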